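/- For Borel probability measures μ, μ₁, μ₂, … on ℝ with distribution functions F, F₁, F₂, …, the sequence μₙ converges weakly to μ if and only if the Lévy distance L(Fₙ, F) tends to 0. -/

import Mathlib

open MeasureTheory Filter

/-- The distribution function of a Borel measure on `ℝ`. -/
noncomputable def distFun (μ : Measure ℝ) (x : ℝ) : ℝ := (μ (Set.Iic x)).toReal

/-- The Lévy distance between two distribution functions. -/
noncomputable def levyDist (F G : ℝ → ℝ) : ℝ :=
  sInf {ε : ℝ | 0 < ε ∧ ∀ x, F (x - ε) - ε ≤ G x ∧ G x ≤ F (x + ε) + ε}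

lemma distFun_nonneg (μ : Measure ℝ) (x : ℝ) : 0 ≤ distFun μ x := ENNReal.toReal_nonneg

lemma distFun_le_one (μ : Measure ℝ) [IsProbabilityMeasure μ] (x : ℝ) : distFun μ x ≤ 1 := by
  rw [distFun]
  have := measure_mono (μ := μ) (Set.subset_univ (Set.Iic x))
  rw [measure_univ] at this
  exact ENNReal.toReal_le_of_le_ofReal zero_le_one (by simpa using this)

lemma distFun_mono (μ : Measure ℝ) [IsProbabilityMeasure μ] : Monotone (distFun μ) := by
  intro x y hxy
  exact ENNReal.toReal_mono (measure_ne_top μ _) (measure_mono (Set.Iic_subset_Iic.mpr hxy))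

lemma levySet_mem_one (μ ν : Measure ℝ) [IsProbabilityMeasure μ] [IsProbabilityMeasure ν]
    {ε : ℝ} (hε : 1 ≤ ε) :
    ε ∈ {ε : ℝ | 0 < ε ∧ ∀ x, distFun ν (x - ε) - ε ≤ distFun μ x ∧
      distFun μ x ≤ distFun ν (x + ε) + ε} := by
  refine ⟨lt_of_lt_of_le one_pos hε, fun x => ⟨?_, ?_⟩⟩
  · have := distFun_le_one ν (x - ε)
    have := distFun_nonneg μ x
    linarith
  · have := distFun_le_one μ x
    have := distFun_nonneg ν (x + ε)
    linarith

lemma levySet_bddBelow (F G : ℝ → ℝ) :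
    BddBelow {ε : ℝ | 0 < ε ∧ ∀ x, F (x - ε) - ε ≤ G x ∧ G x ≤ F (x + ε) + ε} :=
  ⟨0, fun _ h => h.1.le⟩

lemma levyDist_nonneg (F G : ℝ → ℝ) : 0 ≤ levyDist F G :=
  Real.sInf_nonneg fun _ h => h.1.le

/-- If the Lévy conditions hold at scale `η`, they hold at any larger scale (for monotone `F`). -/
lemma levy_cond_mono {F G : ℝ → ℝ} (hF : Monotone F) {η ε : ℝ} (hηε : η ≤ ε)
    (h : ∀ x, F (x - η) - η ≤ G x ∧ G x ≤ F (x + η) + η) :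
    ∀ x, F (x - ε) - ε ≤ G x ∧ G x ≤ F (x + ε) + ε := by
  intro x
  constructor
  · have h1 : F (x - ε) ≤ F (x - η) := hF (by linarith)
    have := (h x).1
    linarith
  · have h1 : F (x + η) ≤ F (x + ε) := hF (by linarith)
    have := (h x).2
    linarith

lemma levyDist_le (μ ν : Measure ℝ) [IsProbabilityMeasure μ] [IsProbabilityMeasure ν]
    {η : ℝ} (hη : 0 < η)
    (h : ∀ x, distFun ν (x - η) - η ≤ distFun μ x ∧ distFun μ x ≤ distFun ν (x + η) + η) :
    levyDist (distFun ν) (distFun μ) ≤ η :=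
  csInf_le (levySet_bddBelow _ _) ⟨hη, h⟩

lemma levyDist_lt_extract (μ ν : Measure ℝ) [IsProbabilityMeasure μ] [IsProbabilityMeasure ν]
    {ε : ℝ} (h : levyDist (distFun ν) (distFun μ) < ε) :
    ∀ x, distFun ν (x - ε) - ε ≤ distFun μ x ∧ distFun μ x ≤ distFun ν (x + ε) + ε := by
  obtain ⟨η, hη, hηε⟩ := (csInf_lt_iff (levySet_bddBelow _ _)
    ⟨1, levySet_mem_one μ ν le_rfl⟩).mp h
  exact levy_cond_mono (distFun_mono ν) hηε.le hη.2

lemma thickening_Iic_subset {δ : ℝ} (y : ℝ) :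
    Metric.thickening δ (Set.Iic y) ⊆ Set.Iic (y + δ) := by
  intro z hz
  rw [Metric.mem_thickening_iff] at hz
  obtain ⟨w, hw, hdist⟩ := hz
  have : z - w ≤ |z - w| := le_abs_self _
  rw [← Real.dist_eq] at this
  simp only [Set.mem_Iic] at hw ⊢
  linarith

lemma toReal_le_add_of_meas_le {μ ν : Measure ℝ} [IsProbabilityMeasure μ] [IsProbabilityMeasure ν]
    {S T : Set ℝ} {c : ℝ} (hc : 0 ≤ c) (h : μ S ≤ ν T + ENNReal.ofReal c) :
    (μ S).toReal ≤ (ν T).toReal + c := by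
  have h2 := ENNReal.toReal_mono
    (ENNReal.add_ne_top.mpr ⟨measure_ne_top _ _, ENNReal.ofReal_ne_top⟩) h
  rwa [ENNReal.toReal_add (measure_ne_top ν T) ENNReal.ofReal_ne_top,
    ENNReal.toReal_ofReal hc] at h2

lemma forward_dir (μ : Measure ℝ) (ν : ℕ → Measure ℝ)
    [IsProbabilityMeasure μ] [∀ n, IsProbabilityMeasure (ν n)]
    (h : ∀ f : ℝ → ℝ, Continuous f → (∃ C, ∀ x, |f x| ≤ C) →
        Tendsto (fun n => ∫ x, f x ∂(ν n)) atTop (nhds (∫ x, f x ∂μ))) :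
    Tendsto (fun n => levyDist (distFun (ν n)) (distFun μ)) atTop (nhds 0) := by
  set P : ℕ → ProbabilityMeasure ℝ := fun n => ⟨ν n, inferInstance⟩ with hPdef
  set Q : ProbabilityMeasure ℝ := ⟨μ, inferInstance⟩ with hQdef
  have hP : Tendsto P atTop (nhds Q) := by
    rw [MeasureTheory.ProbabilityMeasure.tendsto_iff_forall_integral_tendsto]
    intro f
    exact h f f.continuous ⟨‖f‖, fun x => f.norm_coe_le_norm x⟩
  have hcont := (LevyProkhorov.probabilityMeasureHomeomorph (Ω := ℝ)).continuous
  have hLP : Tendsto (fun n => levyProkhorovDist (ν n) μ) atTop (nhds 0) := by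
    have h2 : Tendsto (fun n => LevyProkhorov.probabilityMeasureHomeomorph (P n)) atTop
        (nhds (LevyProkhorov.probabilityMeasureHomeomorph Q)) :=
      (hcont.tendsto Q).comp hP
    have h3 := tendsto_iff_dist_tendsto_zero.mp h2
    convert h3 using 2
    rw [LevyProkhorov.dist_probabilityMeasure_def]
    rfl
  rw [Metric.tendsto_atTop] at hLP ⊢
  intro ε hε
  obtain ⟨N, hN⟩ := hLP (ε / 4) (by linarith)
  refine ⟨N, fun n hn => ?_⟩
  have hdist := hN n hn
  rw [Real.dist_eq, sub_zero] at hdist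
  have hnonneg : 0 ≤ levyProkhorovDist (ν n) μ := ENNReal.toReal_nonneg
  rw [abs_of_nonneg hnonneg] at hdist
  have hED : levyProkhorovEDist (ν n) μ < ENNReal.ofReal (ε / 2) := by
    rw [ENNReal.lt_ofReal_iff_toReal_lt (levyProkhorovEDist_ne_top _ _)]
    calc (levyProkhorovEDist (ν n) μ).toReal = levyProkhorovDist (ν n) μ := rfl
    _ < ε / 4 := hdist
    _ < ε / 2 := by linarith
  have htR : (ENNReal.ofReal (ε / 2)).toReal = ε / 2 := ENNReal.toReal_ofReal (by linarith)
  have key : ∀ x, distFun (ν n) (x - 3 * ε / 4) - 3 * ε / 4 ≤ distFun μ x ∧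
      distFun μ x ≤ distFun (ν n) (x + 3 * ε / 4) + 3 * ε / 4 := by
    intro x
    constructor
    · have h1 := left_measure_le_of_levyProkhorovEDist_lt hED
        (B := Set.Iic (x - 3 * ε / 4)) measurableSet_Iic
      rw [htR] at h1
      have h2 : ν n (Set.Iic (x - 3 * ε / 4)) ≤ μ (Set.Iic x) + ENNReal.ofReal (ε / 2) := by
        refine h1.trans (add_le_add (le_trans (measure_mono
          (thickening_Iic_subset _)) (measure_mono (Set.Iic_subset_Iic.mpr (by linarith)))) le_rfl)
      have h3 := toReal_le_add_of_meas_le (by linarith) h2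
      simp only [distFun]
      linarith
    · have h1 := right_measure_le_of_levyProkhorovEDist_lt hED
        (B := Set.Iic x) measurableSet_Iic
      rw [htR] at h1
      have h2 : μ (Set.Iic x) ≤ ν n (Set.Iic (x + 3 * ε / 4)) + ENNReal.ofReal (ε / 2) := by
        refine h1.trans (add_le_add (le_trans (measure_mono
          (thickening_Iic_subset _)) (measure_mono (Set.Iic_subset_Iic.mpr (by linarith)))) le_rfl)
      have h3 := toReal_le_add_of_meas_le (by linarith) h2
      simp only [distFun]
      linarith
  have hle : levyDist (distFun (ν n)) (distFun μ) ≤ 3 * ε / 4 :=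
    levyDist_le μ (ν n) (by linarith) key
  rw [Real.dist_eq, sub_zero, abs_of_nonneg (levyDist_nonneg _ _)]
  linarith

lemma grid_mono {k : ℕ} {t : ℕ → ℝ} (hstep : ∀ i < k, t i < t (i + 1)) :
    ∀ {i j : ℕ}, i ≤ j → j ≤ k → t i ≤ t j := by
  intro i j hij hjk
  induction j with
  | zero => exact le_of_eq (congrArg t (Nat.le_zero.mp hij))
  | succ m ih =>
    rcases eq_or_lt_of_le hij with h | h
    · exact le_of_eq (congrArg t h)
    · exact le_trans (ih (Nat.lt_succ_iff.mp h) (le_trans (Nat.le_succ m) hjk))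
        (hstep m (Nat.lt_of_succ_le hjk)).le

lemma step_eval {k : ℕ} {t : ℕ → ℝ} {a b : ℝ} (hk : 0 < k) (ht0 : t 0 = a) (htk : t k = b)
    (hstep : ∀ i < k, t i < t (i + 1)) (c : ℕ → ℝ) {x : ℝ} (hx : x ∈ Set.Ioc a b) :
    ∃ i ∈ Finset.Icc 1 k, x ∈ Set.Ioc (t (i - 1)) (t i) ∧
      (∑ j ∈ Finset.Icc 1 k, (Set.Ioc (t (j - 1)) (t j)).indicator (fun _ => c j) x) = c i := by
  classical
  have hPk : x ≤ t k := htk ▸ hx.2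
  have hex : ∃ n, x ≤ t n := ⟨k, hPk⟩
  set i := Nat.find hex with hidef
  have hspec : x ≤ t i := Nat.find_spec hex
  have hik : i ≤ k := Nat.find_le hPk
  have hi1 : 1 ≤ i := by
    rcases Nat.eq_zero_or_pos i with h0 | h0
    · exfalso
      have := h0 ▸ hspec
      rw [ht0] at this
      exact absurd this (not_le.mpr hx.1)
    · exact h0
  have hmin : t (i - 1) < x := by
    have hlt : i - 1 < i := Nat.sub_lt hi1 one_pos
    have := Nat.find_min hex hlt
    exact not_le.mp this
  refine ⟨i, Finset.mem_Icc.mpr ⟨hi1, hik⟩, ⟨hmin, hspec⟩, ?_⟩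
  have hz : ∀ j ∈ Finset.Icc 1 k, j ≠ i →
      (Set.Ioc (t (j - 1)) (t j)).indicator (fun _ => c j) x = 0 := by
    intro j hj hne
    rw [Finset.mem_Icc] at hj
    apply Set.indicator_of_notMem
    rcases lt_or_gt_of_ne hne with hji | hji
    · intro hmem
      exact Nat.find_min hex hji hmem.2
    · intro hmem
      have h1 : t i ≤ t (j - 1) :=
        grid_mono hstep (Nat.le_sub_one_of_lt hji) (le_trans (Nat.sub_le _ _) hj.2)
      exact absurd (lt_of_le_of_lt (hspec.trans h1) hmem.1) (lt_irrefl x)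
  rw [Finset.sum_eq_single_of_mem i (Finset.mem_Icc.mpr ⟨hi1, hik⟩) hz]
  exact Set.indicator_of_mem (Set.mem_Ioc.mpr ⟨hmin, hspec⟩) _

lemma step_zero {k : ℕ} {t : ℕ → ℝ} {a b : ℝ} (ht0 : t 0 = a) (htk : t k = b)
    (hstep : ∀ i < k, t i < t (i + 1)) (c : ℕ → ℝ) {x : ℝ} (hx : x ∉ Set.Ioc a b) :
    (∑ j ∈ Finset.Icc 1 k, (Set.Ioc (t (j - 1)) (t j)).indicator (fun _ => c j) x) = 0 := by
  apply Finset.sum_eq_zero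
  intro j hj
  rw [Finset.mem_Icc] at hj
  apply Set.indicator_of_notMem
  intro hmem
  apply hx
  constructor
  · have : t 0 ≤ t (j - 1) := grid_mono hstep (Nat.zero_le _) (le_trans (Nat.sub_le _ _) hj.2)
    exact lt_of_le_of_lt (ht0 ▸ this) hmem.1
  · have : t j ≤ t k := grid_mono hstep hj.2 le_rfl
    exact hmem.2.trans (htk ▸ this)

lemma integral_step (ν : Measure ℝ) [IsProbabilityMeasure ν] {k : ℕ} {t : ℕ → ℝ}
    (hmono : ∀ j ∈ Finset.Icc 1 k, t (j - 1) ≤ t j) (c : ℕ → ℝ) :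
    ∫ x, (∑ j ∈ Finset.Icc 1 k, (Set.Ioc (t (j - 1)) (t j)).indicator (fun _ => c j) x) ∂ν
      = ∑ j ∈ Finset.Icc 1 k, c j * (distFun ν (t j) - distFun ν (t (j - 1))) := by
  rw [integral_finset_sum _ (fun j hj => (integrable_const (c j)).indicator measurableSet_Ioc)]
  refine Finset.sum_congr rfl (fun j hj => ?_)
  rw [integral_indicator_const _ measurableSet_Ioc]
  have hIoc : ν (Set.Ioc (t (j - 1)) (t j)) = ν (Set.Iic (t j)) - ν (Set.Iic (t (j - 1))) := by
    rw [← Set.Iic_sdiff_Iic, measure_diff (Set.Iic_subset_Iic.mpr (hmono j hj))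
      measurableSet_Iic.nullMeasurableSet (measure_ne_top ν _)]
  rw [measureReal_def, hIoc, smul_eq_mul, mul_comm, ENNReal.toReal_sub_of_le
    (measure_mono (Set.Iic_subset_Iic.mpr (hmono j hj))) (measure_ne_top ν _)]
  rfl

lemma integral_sub_step_bound (ν : Measure ℝ) [IsProbabilityMeasure ν]
    {f : ℝ → ℝ} (hf : Continuous f) {C : ℝ} (hC : ∀ x, |f x| ≤ C)
    {k : ℕ} {t : ℕ → ℝ} {a b δ ε : ℝ} (hk : 0 < k) (ht0 : t 0 = a) (htk : t k = b)
    (hstep : ∀ i < k, t i < t (i + 1) ∧ t (i + 1) - t i ≤ δ)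
    (hf_close : ∀ x ∈ Set.Icc a b, ∀ y ∈ Set.Icc a b, |x - y| ≤ δ → |f x - f y| ≤ ε)
    (hε : 0 ≤ ε) :
    |(∫ x, f x ∂ν) - ∑ j ∈ Finset.Icc 1 k, f (t j) * (distFun ν (t j) - distFun ν (t (j - 1)))|
      ≤ ε + C * (distFun ν a + (1 - distFun ν b)) := by
  have hstep1 : ∀ i < k, t i < t (i + 1) := fun i hi => (hstep i hi).1
  have hmono : ∀ j ∈ Finset.Icc 1 k, t (j - 1) ≤ t j := by
    intro j hj
    rw [Finset.mem_Icc] at hj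
    have h1 : j - 1 < k := lt_of_lt_of_le (Nat.sub_lt hj.1 one_pos) hj.2
    have h2 := (hstep1 (j - 1) h1)
    rw [Nat.sub_add_cancel hj.1] at h2
    exact h2.le
  have hab : a ≤ b := by
    rw [← ht0, ← htk]; exact grid_mono hstep1 (Nat.zero_le k) le_rfl
  have hC0 : 0 ≤ C := le_trans (abs_nonneg _) (hC 0)
  set g : ℝ → ℝ :=
    fun x => ∑ j ∈ Finset.Icc 1 k, (Set.Ioc (t (j - 1)) (t j)).indicator (fun _ => f (t j)) x
    with hgdef
  have hIg : ∫ x, g x ∂ν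
      = ∑ j ∈ Finset.Icc 1 k, f (t j) * (distFun ν (t j) - distFun ν (t (j - 1))) :=
    integral_step ν hmono _
  set fb : BoundedContinuousFunction ℝ ℝ := BoundedContinuousFunction.ofNormedAddCommGroup f hf C
    (fun x => by rw [Real.norm_eq_abs]; exact hC x) with hfbdef
  have hfint : Integrable f ν := fb.integrable ν
  have hgint : Integrable g ν := by
    apply integrable_finset_sum
    intro j hj
    exact (integrable_const (f (t j))).indicator measurableSet_Ioc
  set h : ℝ → ℝ := fun x => (Set.Ioc a b).indicator (fun _ => ε) x
      + (Set.Ioc a b)ᶜ.indicator (fun _ => C) x with hhdef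
  have hhint : Integrable h ν :=
    ((integrable_const ε).indicator measurableSet_Ioc).add
      ((integrable_const C).indicator measurableSet_Ioc.compl)
  have hbound : ∀ x, ‖f x - g x‖ ≤ h x := by
    intro x
    rw [Real.norm_eq_abs]
    by_cases hx : x ∈ Set.Ioc a b
    · obtain ⟨i, hi, hxi, hgx⟩ := step_eval hk ht0 htk hstep1 (fun j => f (t j)) hx
      rw [Finset.mem_Icc] at hi
      have hgx' : g x = f (t i) := hgx
      have hti : t i ∈ Set.Icc a b := by
        constructor
        · rw [← ht0]; exact grid_mono hstep1 (Nat.zero_le i) hi.2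
        · rw [← htk]; exact grid_mono hstep1 hi.2 le_rfl
      have hxd : |x - t i| ≤ δ := by
        have h1 : t (i - 1) < x := hxi.1
        have h2 : x ≤ t i := hxi.2
        have h3 : t i - t (i - 1) ≤ δ := by
          have hlt : i - 1 < k := lt_of_lt_of_le (Nat.sub_lt hi.1 one_pos) hi.2
          have h4 := (hstep (i - 1) hlt).2
          rwa [Nat.sub_add_cancel hi.1] at h4
        rw [abs_le]
        constructor <;> linarith
      have := hf_close x (Set.mem_Icc_of_Ioc hx) (t i) hti hxd
      have hhx : h x = ε := by
        rw [hhdef]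
        have hxc : x ∉ (Set.Ioc a b)ᶜ := by simpa using hx
        simp only [Set.indicator_of_mem hx, Set.indicator_of_notMem hxc]
        ring
      rw [hgx', hhx]
      exact this
    · have hgx : g x = 0 := step_zero ht0 htk hstep1 _ hx
      have hhx : h x = C := by
        rw [hhdef]
        simp only [Set.indicator_of_notMem hx, Set.indicator_of_mem (Set.mem_compl hx)]
        ring
      rw [hgx, hhx, sub_zero]
      exact hC x
  have hmain : ‖∫ x, (f x - g x) ∂ν‖ ≤ ∫ x, h x ∂ν :=
    norm_integral_le_of_norm_le hhint (Eventually.of_forall hbound)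
  rw [integral_sub hfint hgint] at hmain
  rw [Real.norm_eq_abs] at hmain
  have hIh : ∫ x, h x ∂ν ≤ ε + C * (distFun ν a + (1 - distFun ν b)) := by
    rw [hhdef]
    rw [integral_add ((integrable_const ε).indicator measurableSet_Ioc)
      ((integrable_const C).indicator measurableSet_Ioc.compl)]
    rw [integral_indicator_const _ measurableSet_Ioc,
      integral_indicator_const _ measurableSet_Ioc.compl]
    have hm1 : (ν (Set.Ioc a b)).toReal ≤ 1 := by
      have h5 := measure_mono (μ := ν) (Set.subset_univ (Set.Ioc a b))
      rw [measure_univ] at h5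
      exact ENNReal.toReal_le_of_le_ofReal zero_le_one (by simpa using h5)
    have hIoc : (ν (Set.Ioc a b)).toReal = distFun ν b - distFun ν a := by
      rw [← Set.Iic_sdiff_Iic, measure_diff (Set.Iic_subset_Iic.mpr hab)
        measurableSet_Iic.nullMeasurableSet (measure_ne_top ν _),
        ENNReal.toReal_sub_of_le (measure_mono (Set.Iic_subset_Iic.mpr hab))
          (measure_ne_top ν _)]
      rfl
    have hle1 : ν (Set.Ioc a b) ≤ 1 := by
      have h5 := measure_mono (μ := ν) (Set.subset_univ (Set.Ioc a b))
      rwa [measure_univ] at h5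
    have hcompl : (ν (Set.Ioc a b)ᶜ).toReal = 1 - (distFun ν b - distFun ν a) := by
      rw [measure_compl measurableSet_Ioc (measure_ne_top ν _), measure_univ,
        ENNReal.toReal_sub_of_le hle1 ENNReal.one_ne_top, hIoc, ENNReal.toReal_one]
    simp only [smul_eq_mul, measureReal_def]
    rw [hcompl]
    nlinarith [ENNReal.toReal_nonneg (a := ν (Set.Ioc a b))]
  calc |(∫ x, f x ∂ν) - ∑ j ∈ Finset.Icc 1 k,
      f (t j) * (distFun ν (t j) - distFun ν (t (j - 1)))|
      = |(∫ x, f x ∂ν) - ∫ x, g x ∂ν| := by rw [hIg]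
    _ ≤ ∫ x, h x ∂ν := hmain
    _ ≤ _ := hIh

lemma exists_grid {D : Set ℝ} (hD : Dense D) {a b δ : ℝ} (ha : a ∈ D) (hb : b ∈ D)
    (hab : a < b) (hδ : 0 < δ) :
    ∃ (k : ℕ) (t : ℕ → ℝ), 0 < k ∧ t 0 = a ∧ t k = b ∧
      (∀ i < k, t i < t (i + 1) ∧ t (i + 1) - t i ≤ δ) ∧ (∀ i ≤ k, t i ∈ D) := by
  set k := ⌈(b - a) / (δ / 2)⌉₊ with hkdef
  have hk : 0 < k := Nat.ceil_pos.mpr (div_pos (by linarith) (by linarith))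
  have hkR : (0 : ℝ) < (k : ℝ) := Nat.cast_pos.mpr hk
  set s := (b - a) / k with hsdef
  have hs : 0 < s := div_pos (by linarith) hkR
  have hsδ : s ≤ δ / 2 := by
    rw [hsdef, div_le_iff₀ hkR]
    have h1 := Nat.le_ceil ((b - a) / (δ / 2))
    calc b - a = (b - a) / (δ / 2) * (δ / 2) := by field_simp
    _ ≤ (k : ℝ) * (δ / 2) := by
        apply mul_le_mul_of_nonneg_right _ (by linarith)
        exact_mod_cast h1
    _ = δ / 2 * k := mul_comm _ _
  have hks : (k : ℝ) * s = b - a := by rw [hsdef]; field_simp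
  have hchoice : ∀ i : ℕ, ∃ x, x ∈ D ∧ |x - (a + i * s)| < s / 4 := by
    intro i
    obtain ⟨x, hxD, hx⟩ := hD.exists_mem_open Metric.isOpen_ball
      (Metric.nonempty_ball.mpr (by linarith) :
        (Metric.ball (a + (i : ℝ) * s) (s / 4)).Nonempty)
    exact ⟨x, hxD, by rwa [Metric.mem_ball, Real.dist_eq] at hx⟩
  choose u hu1 hu2 using hchoice
  set t : ℕ → ℝ := fun i => if i = 0 then a else if k ≤ i then b else u i with htdef
  have ht0 : t 0 = a := by simp [htdef]
  have htk : t k = b := by simp [htdef, hk.ne', le_refl]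
  have hnear : ∀ i ≤ k, |t i - (a + i * s)| ≤ s / 4 := by
    intro i hi
    rcases Nat.eq_zero_or_pos i with h0 | h0
    · subst h0; simp [ht0, hs.le, abs_of_nonpos]
      positivity
    rcases eq_or_lt_of_le hi with hik | hik
    · rw [hik, htk]
      have : a + (k : ℝ) * s = b := by rw [hks]; ring
      rw [this, sub_self, abs_zero]
      positivity
    · have : t i = u i := by simp [htdef, h0.ne', not_le.mpr hik]
      rw [this]
      exact (hu2 i).le
  refine ⟨k, t, hk, ht0, htk, ?_, ?_⟩
  · intro i hi
    have h1 := hnear i hi.le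
    have h2 := hnear (i + 1) hi
    rw [abs_le] at h1 h2
    push_cast at h1 h2
    constructor
    · nlinarith [h1.1, h1.2, h2.1, h2.2]
    · nlinarith [h1.1, h1.2, h2.1, h2.2]
  · intro i hi
    rcases Nat.eq_zero_or_pos i with h0 | h0
    · subst h0; rwa [ht0]
    rcases eq_or_lt_of_le hi with hik | hik
    · rw [hik, htk]; exact hb
    · have : t i = u i := by simp [htdef, h0.ne', not_le.mpr hik]
      rw [this]; exact hu1 i

section
variable (μ : Measure ℝ) (ν : ℕ → Measure ℝ) [IsProbabilityMeasure μ]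
  [∀ n, IsProbabilityMeasure (ν n)]

lemma cdf_tendsto_of_levy
    (h : Tendsto (fun n => levyDist (distFun (ν n)) (distFun μ)) atTop (nhds 0))
    {t : ℝ} (ht : ContinuousAt (distFun μ) t) :
    Tendsto (fun n => distFun (ν n) t) atTop (nhds (distFun μ t)) := by
  rw [Metric.tendsto_atTop]
  intro ε hε
  obtain ⟨δ, hδ, hδ'⟩ := Metric.continuousAt_iff.mp ht (ε / 2) (by linarith)
  set η := min (δ / 2) (ε / 2) with hηdef
  have hη : 0 < η := lt_min (by linarith) (by linarith)
  have hηδ : η < δ := lt_of_le_of_lt (min_le_left _ _) (by linarith)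
  have hηε : η ≤ ε / 2 := min_le_right _ _
  rw [Metric.tendsto_atTop] at h
  obtain ⟨N, hN⟩ := h η hη
  refine ⟨N, fun n hn => ?_⟩
  have hLη : levyDist (distFun (ν n)) (distFun μ) < η := by
    have := hN n hn
    rw [Real.dist_eq, sub_zero] at this
    exact lt_of_le_of_lt (le_abs_self _) this
  have hcond := levyDist_lt_extract μ (ν n) hLη
  have h1 := (hcond (t + η)).1
  have h2 := (hcond (t - η)).2
  simp only [add_sub_cancel_right, sub_add_cancel] at h1 h2
  have hc1 : |distFun μ (t + η) - distFun μ t| < ε / 2 := by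
    have := hδ' (x := t + η) (by rw [Real.dist_eq]; rw [add_sub_cancel_left]
                                 rwa [abs_of_nonneg hη.le])
    rwa [Real.dist_eq] at this
  have hc2 : |distFun μ (t - η) - distFun μ t| < ε / 2 := by
    have := hδ' (x := t - η) (by rw [Real.dist_eq, sub_sub_cancel_left, abs_neg,
                                     abs_of_nonneg hη.le]; exact hηδ)
    rwa [Real.dist_eq] at this
  rw [Real.dist_eq, abs_lt]
  rw [abs_lt] at hc1 hc2
  constructor <;> nlinarith [hc1.1, hc1.2, hc2.1, hc2.2]

lemma dense_continuousAt : Dense {x : ℝ | ContinuousAt (distFun μ) x} := by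
  have hc := (distFun_mono μ).countable_not_continuousAt
  have := hc.dense_compl ℝ
  rwa [show {x : ℝ | ¬ContinuousAt (distFun μ) x}ᶜ = {x | ContinuousAt (distFun μ) x} by
    ext x; simp]  at this

lemma exists_tails {ε : ℝ} (hε : 0 < ε) :
    ∃ a b : ℝ, a < b ∧ ContinuousAt (distFun μ) a ∧ ContinuousAt (distFun μ) b ∧
      distFun μ a < ε ∧ 1 - ε < distFun μ b := by
  have hlow : Tendsto (fun n : ℕ => (μ (Set.Iic (-(n : ℝ)))).toReal) atTop (nhds 0) := by
    have h1 : Tendsto (fun n : ℕ => μ (Set.Iic (-(n : ℝ)))) atTop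
        (nhds (μ (⋂ n : ℕ, Set.Iic (-(n : ℝ))))) := by
      refine tendsto_measure_iInter_atTop (fun n => measurableSet_Iic.nullMeasurableSet)
        (fun i j hij => Set.Iic_subset_Iic.mpr (by exact_mod_cast neg_le_neg (Nat.cast_le.mpr hij)))
        ⟨0, measure_ne_top μ _⟩
    have h2 : (⋂ n : ℕ, Set.Iic (-(n : ℝ))) = ∅ := by
      ext x
      simp only [Set.mem_iInter, Set.mem_Iic, Set.mem_empty_iff_false, iff_false, not_forall,
        not_le]
      obtain ⟨n, hn⟩ := exists_nat_gt (-x)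
      exact ⟨n, by linarith⟩
    rw [h2, measure_empty] at h1
    exact (ENNReal.tendsto_toReal ENNReal.zero_ne_top).comp h1
  have hhigh : Tendsto (fun x : ℝ => (μ (Set.Iic x)).toReal) atTop (nhds 1) := by
    have h1 := tendsto_measure_Iic_atTop μ
    rw [measure_univ] at h1
    have := (ENNReal.tendsto_toReal ENNReal.one_ne_top).comp h1
    rw [ENNReal.toReal_one] at this
    exact this
  obtain ⟨n, hn⟩ := (hlow.eventually (eventually_lt_nhds hε)).exists
  obtain ⟨B, hB⟩ := (eventually_atTop.mp
    (hhigh.eventually (eventually_gt_nhds (show 1 - ε < 1 by linarith))))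
  obtain ⟨a, haD, ha⟩ := (dense_continuousAt μ).exists_mem_open isOpen_Iio
    (Set.nonempty_Iio (a := -(n:ℝ)))
  obtain ⟨b, hbD, hb⟩ := (dense_continuousAt μ).exists_mem_open isOpen_Ioi
    (Set.nonempty_Ioi (a := max B a))
  refine ⟨a, b, ?_, haD, hbD, ?_, ?_⟩
  · exact lt_of_le_of_lt (le_max_right B a) hb
  · exact lt_of_le_of_lt (distFun_mono μ (le_of_lt ha)) hn
  · exact hB b (le_trans (le_max_left B a) hb.le)

end

section
variable (μ : Measure ℝ) (ν : ℕ → Measure ℝ) [IsProbabilityMeasure μ]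
  [∀ n, IsProbabilityMeasure (ν n)]

lemma reverse_dir
    (h : Tendsto (fun n => levyDist (distFun (ν n)) (distFun μ)) atTop (nhds 0)) :
    ∀ f : ℝ → ℝ, Continuous f → (∃ C, ∀ x, |f x| ≤ C) →
        Tendsto (fun n => ∫ x, f x ∂(ν n)) atTop (nhds (∫ x, f x ∂μ)) := by
  rintro f hf ⟨C, hC⟩
  have hC0 : 0 ≤ C := le_trans (abs_nonneg _) (hC 0)
  rw [Metric.tendsto_atTop]
  intro ε0 hε0
  set ε := ε0 / (6 * C + 4) with hεdef
  have hε : 0 < ε := div_pos hε0 (by linarith)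
  obtain ⟨a, b, hab, haD, hbD, hFa, hFb⟩ := exists_tails μ hε
  have hucont := (isCompact_Icc (a := a) (b := b)).uniformContinuousOn_of_continuous
    hf.continuousOn
  rw [Metric.uniformContinuousOn_iff] at hucont
  obtain ⟨δ, hδ, hδ'⟩ := hucont ε hε
  obtain ⟨k, t, hk, ht0, htk, hstep, htD⟩ :=
    exists_grid (dense_continuousAt μ) haD hbD hab (half_pos hδ)
  have hf_close : ∀ x ∈ Set.Icc a b, ∀ y ∈ Set.Icc a b, |x - y| ≤ δ / 2 → |f x - f y| ≤ ε := by
    intro x hx y hy hxy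
    have := hδ' x hx y hy (by rw [Real.dist_eq]; linarith)
    rw [Real.dist_eq] at this
    exact this.le
  set I : Measure ℝ → ℝ := fun m => ∑ j ∈ Finset.Icc 1 k,
    f (t j) * (distFun m (t j) - distFun m (t (j - 1))) with hIdef
  have hA : ∀ (m : Measure ℝ), ∀ (_ : IsProbabilityMeasure m),
      |(∫ x, f x ∂m) - I m| ≤ ε + C * (distFun m a + (1 - distFun m b)) :=
    fun m _ => integral_sub_step_bound m hf hC hk ht0 htk hstep hf_close hε.le
  have hIconv : Tendsto (fun n => I (ν n)) atTop (nhds (I μ)) := by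
    apply tendsto_finset_sum
    intro j hj
    rw [Finset.mem_Icc] at hj
    exact Tendsto.const_mul _ ((cdf_tendsto_of_levy μ ν h (htD j hj.2)).sub
      (cdf_tendsto_of_levy μ ν h (htD (j - 1) (le_trans (Nat.sub_le _ _) hj.2))))
  obtain ⟨N1, hN1⟩ := Metric.tendsto_atTop.mp hIconv ε hε
  obtain ⟨N2, hN2⟩ := Metric.tendsto_atTop.mp (cdf_tendsto_of_levy μ ν h haD) ε hε
  obtain ⟨N3, hN3⟩ := Metric.tendsto_atTop.mp (cdf_tendsto_of_levy μ ν h hbD) ε hε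
  refine ⟨max N1 (max N2 N3), fun n hn => ?_⟩
  have hn1 := hN1 n (le_trans (le_max_left _ _) hn)
  have hn2 := hN2 n (le_trans (le_trans (le_max_left _ _) (le_max_right N1 _)) hn)
  have hn3 := hN3 n (le_trans (le_trans (le_max_right _ _) (le_max_right N1 _)) hn)
  rw [Real.dist_eq] at hn1 hn2 hn3 ⊢
  rw [abs_lt] at hn1 hn2 hn3
  have hDa : distFun (ν n) a < 2 * ε := by linarith [hn2.2]
  have hDb : 1 - distFun (ν n) b < 2 * ε := by linarith [hn3.1]
  have hAn := hA (ν n) inferInstance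
  have hAμ := hA μ inferInstance
  have hDa0 : 0 ≤ distFun (ν n) a := ENNReal.toReal_nonneg
  have hDb1 : distFun (ν n) b ≤ 1 := by
    have h5 := measure_mono (μ := ν n) (Set.subset_univ (Set.Iic b))
    rw [measure_univ] at h5
    exact ENNReal.toReal_le_of_le_ofReal zero_le_one (by simpa using h5)
  have hDa0' : 0 ≤ distFun μ a := ENNReal.toReal_nonneg
  have hDb1' : distFun μ b ≤ 1 := by
    have h5 := measure_mono (μ := μ) (Set.subset_univ (Set.Iic b))
    rw [measure_univ] at h5
    exact ENNReal.toReal_le_of_le_ofReal zero_le_one (by simpa using h5)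
  have hbn : |(∫ x, f x ∂(ν n)) - I (ν n)| ≤ ε + 4 * C * ε := by
    refine le_trans hAn ?_
    have : distFun (ν n) a + (1 - distFun (ν n) b) ≤ 4 * ε := by linarith
    nlinarith
  have hbμ : |(∫ x, f x ∂μ) - I μ| ≤ ε + 2 * C * ε := by
    refine le_trans hAμ ?_
    have : distFun μ a + (1 - distFun μ b) ≤ 2 * ε := by linarith
    nlinarith
  have htotal : |(∫ x, f x ∂(ν n)) - ∫ x, f x ∂μ| < (6 * C + 3) * ε := by
    have h1 := abs_sub_abs_le_abs_sub (∫ x, f x ∂(ν n)) (∫ x, f x ∂μ)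
    calc |(∫ x, f x ∂(ν n)) - ∫ x, f x ∂μ|
        ≤ |(∫ x, f x ∂(ν n)) - I (ν n)| + |I (ν n) - I μ| + |I μ - (∫ x, f x ∂μ)| := by
          have := abs_sub_le ((∫ x, f x ∂(ν n))) (I (ν n)) (∫ x, f x ∂μ)
          have h2 := abs_sub_le (I (ν n)) (I μ) (∫ x, f x ∂μ)
          linarith
      _ < (ε + 4 * C * ε) + ε + (ε + 2 * C * ε) := by
          have hI : |I (ν n) - I μ| < ε := abs_lt.mpr hn1
          have h3 : |I μ - (∫ x, f x ∂μ)| ≤ ε + 2 * C * ε := by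
            rw [abs_sub_comm]; exact hbμ
          linarith
      _ = (6 * C + 3) * ε := by ring
  have hfin : (6 * C + 3) * ε < ε0 := by
    have h4 : (6 * C + 4) * ε = ε0 := by
      rw [hεdef]; field_simp
    nlinarith
  have habs : |(∫ x, f x ∂(ν n)) - ∫ x, f x ∂μ| < ε0 := lt_trans htotal hfin
  rw [abs_lt] at habs
  rw [abs_lt]
  exact habs
end

theorem weak_conv_iff_levy (μ : Measure ℝ) (ν : ℕ → Measure ℝ)
    [IsProbabilityMeasure μ] [∀ n, IsProbabilityMeasure (ν n)] :
    (∀ f : ℝ → ℝ, Continuous f → (∃ C, ∀ x, |f x| ≤ C) →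
        Tendsto (fun n => ∫ x, f x ∂(ν n)) atTop (nhds (∫ x, f x ∂μ))) ↔
    Tendsto (fun n => levyDist (distFun (ν n)) (distFun μ)) atTop (nhds 0) := by
  exact ⟨forward_dir μ ν, reverse_dir μ ν⟩
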